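/- arXiv:1406.3831 — 2 statements merged into one kernel-verified Lean document; each statement's English description precedes it below -/
import Mathlib

section
/- Let G be a nonzero real M×N matrix with M ≤ N. Then r(G) = M if and only if G·Gᵀ is a positive scalar multiple of the M×M identity matrix (equivalently, the rows of G are pairwise orthogonal and all have the same nonzero Euclidean norm). In particular, if the rows of G are pairwise orthogonal with equal nonzero norm, then r(G) = M. -/
open scoped BigOperators
open Matrix

/-- The squared Frobenius norm of a real `M × N` matrix. -/
noncomputable def frobSq {M N : ℕ} (G : Matrix (Fin M) (Fin N) ℝ) : ℝ :=
  ∑ i, ∑ j, (G i j) ^ 2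

/-- The spectral (ℓ₂ operator) norm of a real `M × N` matrix. -/
noncomputable def specNorm {M N : ℕ} (G : Matrix (Fin M) (Fin N) ℝ) : ℝ :=
  ‖LinearMap.toContinuousLinearMap (Matrix.toEuclideanLin G)‖

/-- The soft-rank `r(G) = ‖G‖_F² / ‖G‖₂²` of a matrix. -/
noncomputable def softRank {M N : ℕ} (G : Matrix (Fin M) (Fin N) ℝ) : ℝ :=
  frobSq G / (specNorm G) ^ 2

lemma euclid_norm {n : ℕ} (v : EuclideanSpace ℝ (Fin n)) :
    ‖v‖ = Real.sqrt (∑ i, v i ^ 2) := by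
  rw [EuclideanSpace.norm_eq]
  simp [Real.norm_eq_abs, sq_abs]

lemma euclid_norm_sq {n : ℕ} (v : EuclideanSpace ℝ (Fin n)) :
    ‖v‖ ^ 2 = ∑ i, v i ^ 2 := by
  rw [euclid_norm, Real.sq_sqrt (Finset.sum_nonneg fun i _ => sq_nonneg _)]

lemma T_apply {M N : ℕ} (G : Matrix (Fin M) (Fin N) ℝ) (y : Fin N → ℝ) (i : Fin M) :
    (LinearMap.toContinuousLinearMap (Matrix.toEuclideanLin G)
        ((WithLp.equiv 2 (Fin N → ℝ)).symm y)) i = ∑ j, G i j * y j := by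
  simp [Matrix.toEuclideanLin_apply, Matrix.mulVec, dotProduct]

lemma T_apply' {M N : ℕ} (G : Matrix (Fin M) (Fin N) ℝ) (y : EuclideanSpace ℝ (Fin N)) (i : Fin M) :
    (LinearMap.toContinuousLinearMap (Matrix.toEuclideanLin G) y) i = ∑ j, G i j * y j := by
  simp [Matrix.toEuclideanLin_apply, Matrix.mulVec, dotProduct]

/-- A row norm is a lower bound for the spectral norm. -/
lemma key3 {M N : ℕ} (G : Matrix (Fin M) (Fin N) ℝ) (i₀ : Fin M) :
    Real.sqrt (∑ j, G i₀ j ^ 2) ≤ specNorm G := by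
  set s := ∑ j, G i₀ j ^ 2 with hs
  have hs0 : 0 ≤ s := Finset.sum_nonneg fun j _ => sq_nonneg _
  set T := LinearMap.toContinuousLinearMap (Matrix.toEuclideanLin G) with hT
  set y : EuclideanSpace ℝ (Fin N) := (WithLp.equiv 2 (Fin N → ℝ)).symm (G i₀) with hy
  have hyn : ‖y‖ = Real.sqrt s := by
    rw [euclid_norm]
    congr 1
  have hTy : (T y) i₀ = s := by
    rw [hy, T_apply]
    simp [hs, sq]
  have h1 : s ≤ ‖T y‖ := by
    calc s = |(T y) i₀| := by rw [hTy]; exact (abs_of_nonneg hs0).symm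
    _ ≤ ‖T y‖ := by
        rw [euclid_norm]
        have : (T y i₀)^2 ≤ ∑ i, (T y i)^2 :=
          Finset.single_le_sum (f := fun i => (T y i)^2) (fun i _ => sq_nonneg _)
            (Finset.mem_univ i₀)
        calc |(T y) i₀| = Real.sqrt ((T y i₀)^2) := (Real.sqrt_sq_eq_abs _).symm
        _ ≤ _ := Real.sqrt_le_sqrt this
  have h2 : ‖T y‖ ≤ ‖T‖ * ‖y‖ := T.le_opNorm y
  have : s ≤ ‖T‖ * Real.sqrt s := by rw [← hyn]; exact h1.trans h2
  rcases eq_or_lt_of_le hs0 with h | h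
  · simp [← h]
    exact norm_nonneg _
  · have hss : Real.sqrt s * Real.sqrt s = s := Real.mul_self_sqrt hs0
    have hsp : 0 < Real.sqrt s := Real.sqrt_pos.mpr h
    have hTn : specNorm G = ‖T‖ := rfl
    rw [hTn]
    nlinarith [this]

/-- The quadratic form `x ↦ ‖Gᵀ x‖²` is bounded by `‖G‖₂² ‖x‖²`. -/
lemma key1 {M N : ℕ} (G : Matrix (Fin M) (Fin N) ℝ) (x : Fin M → ℝ) :
    ∑ j, (∑ i, x i * G i j) ^ 2 ≤ specNorm G ^ 2 * ∑ i, x i ^ 2 := by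
  set T := LinearMap.toContinuousLinearMap (Matrix.toEuclideanLin G) with hT
  have hTn : specNorm G = ‖T‖ := rfl
  set w : Fin N → ℝ := fun j => ∑ i, x i * G i j with hw
  set Q := ∑ j, (∑ i, x i * G i j) ^ 2 with hQ
  have hQ0 : 0 ≤ Q := Finset.sum_nonneg fun j _ => sq_nonneg _
  set y : EuclideanSpace ℝ (Fin N) := (WithLp.equiv 2 (Fin N → ℝ)).symm w with hy
  have hyn : ‖y‖ ^ 2 = Q := by rw [euclid_norm_sq]; rfl
  have hTy : ∀ i, (T y) i = ∑ j, G i j * w j := fun i => T_apply G w i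
  have hkey : Q = ∑ i, x i * (T y) i := by
    simp only [hTy, Finset.mul_sum]
    rw [Finset.sum_comm]
    apply Finset.sum_congr rfl
    intro j _
    simp_rw [← mul_assoc]
    rw [← Finset.sum_mul, sq]
  set Sx := ∑ i, x i ^ 2 with hSx
  have hSx0 : 0 ≤ Sx := Finset.sum_nonneg fun i _ => sq_nonneg _
  have hcs : Q ^ 2 ≤ Sx * (‖T‖^2 * Q) := by
    have h1 : (∑ i, x i * (T y) i) ^ 2 ≤ (∑ i, x i ^ 2) * (∑ i, (T y) i ^ 2) :=
      Finset.sum_mul_sq_le_sq_mul_sq _ _ _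
    have h2 : ∑ i, (T y) i ^ 2 ≤ ‖T‖^2 * Q := by
      have := euclid_norm_sq (T y)
      have h3 : ‖T y‖ ≤ ‖T‖ * ‖y‖ := T.le_opNorm y
      have h4 : ‖T y‖ ^ 2 ≤ (‖T‖ * ‖y‖)^2 := by
        apply pow_le_pow_left₀ (norm_nonneg _) h3
      rw [this] at h4
      calc ∑ i, (T y) i ^ 2 ≤ (‖T‖ * ‖y‖)^2 := h4
      _ = ‖T‖^2 * Q := by rw [mul_pow, hyn]
    calc Q ^ 2 = (∑ i, x i * (T y) i) ^ 2 := by rw [hkey]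
    _ ≤ (∑ i, x i ^ 2) * (∑ i, (T y) i ^ 2) := h1
    _ ≤ Sx * (‖T‖^2 * Q) := by
        apply mul_le_mul_of_nonneg_left h2 hSx0
  rw [hTn]
  rcases eq_or_lt_of_le hQ0 with h | h
  · rw [← h]
    positivity
  · nlinarith [hcs]

/-- If the quadratic form is exactly `c ‖x‖²`, then the spectral norm is at most `√c`. -/
lemma key2 {M N : ℕ} (G : Matrix (Fin M) (Fin N) ℝ) (c : ℝ) (hc : 0 ≤ c)
    (h : ∀ x : Fin M → ℝ, ∑ j, (∑ i, x i * G i j) ^ 2 = c * ∑ i, x i ^ 2) :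
    specNorm G ≤ Real.sqrt c := by
  rw [specNorm]
  apply ContinuousLinearMap.opNorm_le_bound _ (Real.sqrt_nonneg c)
  intro y
  set T := LinearMap.toContinuousLinearMap (Matrix.toEuclideanLin G) with hT
  set x : Fin M → ℝ := fun i => T y i with hx
  have hTy2 : ‖T y‖ ^ 2 = ∑ i, x i * (T y) i := by
    rw [euclid_norm_sq]
    apply Finset.sum_congr rfl
    intro i _
    rw [sq]
  have hswap : ∑ i, x i * (T y) i = ∑ j, (∑ i, x i * G i j) * y j := by
    simp only [hT, T_apply' G y, Finset.mul_sum]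
    rw [Finset.sum_comm]
    apply Finset.sum_congr rfl
    intro j _
    rw [Finset.sum_mul]
    apply Finset.sum_congr rfl
    intro i _
    ring
  have cs : (∑ j, (∑ i, x i * G i j) * y j) ^ 2 ≤
      (∑ j, (∑ i, x i * G i j) ^ 2) * (∑ j, (y j) ^ 2) :=
    Finset.sum_mul_sq_le_sq_mul_sq _ _ _
  have hy2 : ∑ j, (y j) ^ 2 = ‖y‖ ^ 2 := (euclid_norm_sq y).symm
  have hx2 : ∑ i, x i ^ 2 = ‖T y‖ ^ 2 := (euclid_norm_sq (T y)).symm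
  rw [h x, hy2, hx2] at cs
  rw [← hswap, ← hTy2] at cs
  rcases eq_or_lt_of_le (norm_nonneg (T y)) with h0 | h0
  · rw [← h0]
    positivity
  · have h1 : ‖T y‖ ^ 2 ≤ c * ‖y‖ ^ 2 := by nlinarith [cs, mul_pos h0 h0]
    have h2 : ‖T y‖ ≤ Real.sqrt (c * ‖y‖ ^ 2) := by
      rw [← Real.sqrt_sq (norm_nonneg (T y))]
      exact Real.sqrt_le_sqrt h1
    rwa [Real.sqrt_mul hc, Real.sqrt_sq (norm_nonneg y)] at h2

lemma key1_diag {M N : ℕ} (G : Matrix (Fin M) (Fin N) ℝ) (i : Fin M) :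
    ∑ j, G i j ^ 2 ≤ specNorm G ^ 2 := by
  have h := key1 G (fun k => if k = i then 1 else 0)
  simp only [ite_mul, one_mul, zero_mul, Finset.sum_ite_eq', Finset.mem_univ, if_true] at h
  simpa using h

lemma key1_offdiag {M N : ℕ} (G : Matrix (Fin M) (Fin N) ℝ) (i i' : Fin M) (hne : i ≠ i')
    (a : ℝ) (hd : ∑ j, G i j ^ 2 = specNorm G ^ 2) (hd' : ∑ j, G i' j ^ 2 = specNorm G ^ 2) :
    2 * a * (∑ j, G i j * G i' j) ≤ 0 := by
  have h := key1 G (fun k => (if k = i then 1 else 0) + a * (if k = i' then 1 else 0))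
  have hx : ∀ j, ∑ k, ((if k = i then (1:ℝ) else 0) + a * (if k = i' then 1 else 0)) * G k j
      = G i j + a * G i' j := by
    intro j
    rw [Finset.sum_congr rfl (fun k _ => add_mul _ _ _), Finset.sum_add_distrib]
    simp [ite_mul, mul_assoc, Finset.mul_sum]
  have hx2 : ∑ k, ((if k = i then (1:ℝ) else 0) + a * (if k = i' then 1 else 0)) ^ 2
      = 1 + a ^ 2 := by
    have : ∀ k, ((if k = i then (1:ℝ) else 0) + a * (if k = i' then 1 else 0)) ^ 2
        = (if k = i then (1:ℝ) else 0) + a ^ 2 * (if k = i' then 1 else 0) := by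
      intro k
      by_cases h1 : k = i <;> by_cases h2 : k = i' <;>
        first
        | (exact absurd (h1.symm.trans h2) hne)
        | simp [h1, h2, hne, hne.symm]
    rw [Finset.sum_congr rfl (fun k _ => this k), Finset.sum_add_distrib]
    simp [Finset.mul_sum]
  rw [hx2] at h
  simp only [hx] at h
  have hexp : ∀ j, (G i j + a * G i' j) ^ 2
      = G i j ^ 2 + 2 * a * (G i j * G i' j) + a ^ 2 * G i' j ^ 2 := fun j => by ring
  rw [Finset.sum_congr rfl (fun j _ => hexp j), Finset.sum_add_distrib,
    Finset.sum_add_distrib, ← Finset.mul_sum, ← Finset.mul_sum, hd, hd'] at h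
  nlinarith [h]

lemma key_expand {M N : ℕ} (G : Matrix (Fin M) (Fin N) ℝ) (c : ℝ)
    (h : ∀ i i' : Fin M, ∑ j, G i j * G i' j = if i = i' then c else 0)
    (x : Fin M → ℝ) :
    ∑ j, (∑ i, x i * G i j) ^ 2 = c * ∑ i, x i ^ 2 := by
  calc ∑ j, (∑ i, x i * G i j) ^ 2
      = ∑ j, ∑ i, ∑ i', (x i * G i j) * (x i' * G i' j) := by
        apply Finset.sum_congr rfl
        intro j _
        rw [sq, Finset.sum_mul_sum]
    _ = ∑ i, ∑ i', ∑ j, (x i * G i j) * (x i' * G i' j) := by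
        rw [Finset.sum_comm]
        apply Finset.sum_congr rfl
        intro i _
        rw [Finset.sum_comm]
    _ = ∑ i, ∑ i', x i * x i' * ∑ j, G i j * G i' j := by
        apply Finset.sum_congr rfl; intro i _
        apply Finset.sum_congr rfl; intro i' _
        rw [Finset.mul_sum]
        apply Finset.sum_congr rfl; intro j _
        ring
    _ = c * ∑ i, x i ^ 2 := by
        simp only [h, mul_ite, mul_zero, Finset.sum_ite_eq, Finset.sum_ite_eq',
          Finset.mem_univ, if_true, Finset.mul_sum]
        apply Finset.sum_congr rfl; intro i _
        ring

/-- For a nonzero real `M × N` matrix `G` with `M ≤ N`, the soft-rank equals `M` if and only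
if `G * Gᵀ` is a positive scalar multiple of the identity (equivalently, the rows of `G` are
pairwise orthogonal with equal nonzero norm).  In particular, pairwise orthogonal rows of equal
nonzero norm force `r(G) = M`. -/
theorem softRank_eq_card_rows_iff {M N : ℕ} (hMN : M ≤ N)
    (G : Matrix (Fin M) (Fin N) ℝ) (hG : G ≠ 0) :
    (softRank G = (M : ℝ) ↔
      ∃ c : ℝ, 0 < c ∧ G * Gᵀ = c • (1 : Matrix (Fin M) (Fin M) ℝ)) ∧
    (((∀ i i' : Fin M, i ≠ i' → ∑ j, G i j * G i' j = 0) ∧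
        ∃ c : ℝ, 0 < c ∧ ∀ i : Fin M, ∑ j, (G i j) ^ 2 = c) →
      softRank G = (M : ℝ)) := by
  classical
  obtain ⟨i₀, j₀, hij⟩ : ∃ i j, G i j ≠ 0 := by
    by_contra h
    push_neg at h
    exact hG (Matrix.ext fun i j => h i j)
  have hrow0 : 0 < ∑ j, G i₀ j ^ 2 := by
    have h1 : (0:ℝ) < G i₀ j₀ ^ 2 := by positivity
    have h2 : G i₀ j₀ ^ 2 ≤ ∑ j, G i₀ j ^ 2 :=
      Finset.single_le_sum (f := fun j => G i₀ j ^ 2) (fun j _ => sq_nonneg _)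
        (Finset.mem_univ j₀)
    linarith
  have hspec : 0 < specNorm G := lt_of_lt_of_le (Real.sqrt_pos.mpr hrow0) (key3 G i₀)
  set lam := specNorm G ^ 2 with hlam
  have hlampos : 0 < lam := pow_pos hspec 2
  have hGGT : ∀ i i' : Fin M, (G * Gᵀ) i i' = ∑ j, G i j * G i' j := by
    intro i i'
    simp [Matrix.mul_apply]
  have hmain : softRank G = (M : ℝ) ↔
      ∃ c : ℝ, 0 < c ∧ G * Gᵀ = c • (1 : Matrix (Fin M) (Fin M) ℝ) := by
    constructor
    · intro h
      have hfrob : frobSq G = (M : ℝ) * lam := by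
        rw [softRank, div_eq_iff (by positivity : (specNorm G ^ 2 : ℝ) ≠ 0)] at h
        rw [hlam, ← h]
      have hdiag : ∀ i : Fin M, ∑ j, G i j ^ 2 = lam := by
        by_contra hcon
        push_neg at hcon
        obtain ⟨i, hi⟩ := hcon
        have hlt : ∑ j, G i j ^ 2 < lam := lt_of_le_of_ne (key1_diag G i) hi
        have hsum : ∑ i : Fin M, ∑ j, G i j ^ 2 < ∑ _i : Fin M, lam := by
          apply Finset.sum_lt_sum (fun k _ => key1_diag G k) ⟨i, Finset.mem_univ i, hlt⟩
        rw [Finset.sum_const, Finset.card_univ, Fintype.card_fin, nsmul_eq_mul] at hsum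
        have : frobSq G = ∑ i : Fin M, ∑ j, G i j ^ 2 := rfl
        rw [← this, hfrob] at hsum
        exact lt_irrefl _ hsum
      refine ⟨lam, hlampos, ?_⟩
      ext i i'
      rw [hGGT]
      by_cases hii : i = i'
      · subst hii
        simp only [Matrix.smul_apply, Matrix.one_apply_eq, smul_eq_mul, mul_one]
        rw [← hdiag i]
        apply Finset.sum_congr rfl
        intro j _
        rw [sq]
      · have h1 := key1_offdiag G i i' hii (∑ j, G i j * G i' j) (hdiag i) (hdiag i')
        have h2 : ∑ j, G i j * G i' j = 0 := by nlinarith [h1, sq_nonneg (∑ j, G i j * G i' j)]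
        rw [h2]
        simp [Matrix.one_apply, hii]
    · rintro ⟨c, hc, hA⟩
      have hent : ∀ i i' : Fin M, ∑ j, G i j * G i' j = if i = i' then c else 0 := by
        intro i i'
        have := congrFun (congrFun hA i) i'
        rw [hGGT] at this
        rw [this]
        simp [Matrix.one_apply]
      have hdiag : ∀ i : Fin M, ∑ j, G i j ^ 2 = c := by
        intro i
        have h0 := hent i i
        rw [if_pos rfl] at h0
        rw [← h0]
        apply Finset.sum_congr rfl
        intro j _
        rw [sq]
      have hup : specNorm G ≤ Real.sqrt c := key2 G c hc.le (key_expand G c hent)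
      have hlow : Real.sqrt c ≤ specNorm G := by
        have := key3 G i₀
        rwa [hdiag i₀] at this
      have hspec2 : specNorm G ^ 2 = c := by
        rw [le_antisymm hup hlow, Real.sq_sqrt hc.le]
      have hfrob : frobSq G = (M : ℝ) * c := by
        rw [frobSq]
        rw [Finset.sum_congr rfl (fun i _ => hdiag i), Finset.sum_const, Finset.card_univ,
          Fintype.card_fin, nsmul_eq_mul]
      rw [softRank, hspec2, hfrob, mul_div_assoc, div_self hc.ne', mul_one]
  refine ⟨hmain, ?_⟩
  rintro ⟨horth, c, hc, hdiag⟩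
  apply hmain.mpr
  refine ⟨c, hc, ?_⟩
  ext i i'
  rw [hGGT]
  by_cases hii : i = i'
  · subst hii
    simp only [Matrix.smul_apply, Matrix.one_apply_eq, smul_eq_mul, mul_one]
    rw [← hdiag i]
    apply Finset.sum_congr rfl
    intro j _
    rw [sq]
  · rw [horth i i' hii]
    simp [Matrix.one_apply, hii]
end

section
/- (Paper's Lemma) Consider the cyclic shift system on ℝ^N with M ≤ N delays. Then the infimum soft-rank of the attractor satisfies r(𝒜) ≥ M/2; that is, for every pair of distinct states e_a ≠ e_b of the system, the soft-rank of the difference of trajectory matrices satisfies r(G_{e_a} − G_{e_b}) ≥ M/2. -/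
open scoped BigOperators
open Matrix

/-- The `N × N` cyclic shift matrix `Φ`, acting on canonical basis vectors by
`Φ e_j = e_{(j-1) mod N}`. -/
def shiftMat (N : ℕ) : Matrix (Fin N) (Fin N) ℝ :=
  Matrix.of fun i j => if ((i : ℕ) + 1) % N = (j : ℕ) then 1 else 0

/-- The trajectory matrix `G_{e_a} ∈ ℝ^{M×N}` of the state `e_a` of the cyclic shift
system: its `m`-th row is `Φ^{-m} e_a`, where `Φ` is the cyclic shift matrix. -/
noncomputable def cyclicTrajMat (N M : ℕ) (a : Fin N) : Matrix (Fin M) (Fin N) ℝ :=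
  Matrix.of fun m j => (((shiftMat N)⁻¹ ^ (m : ℕ)).mulVec (Pi.single a 1)) j

open Fin.NatCast

section Aux
variable {N : ℕ} [NeZero N]

private lemma mod_helper (x N : ℕ) : (x + 1 % N) % N = (x + 1) % N := by
  conv_lhs => rw [Nat.add_mod, Nat.mod_mod_of_dvd _ dvd_rfl]
  rw [← Nat.add_mod]

lemma shiftMat_apply (i j : Fin N) : shiftMat N i j = if i + 1 = j then (1:ℝ) else 0 := by
  simp only [shiftMat, Matrix.of_apply]
  congr 1
  rw [eq_iff_iff, Fin.ext_iff, Fin.add_def, Fin.val_one']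
  simp [mod_helper]

lemma shiftMat_mul_transpose : shiftMat N * (shiftMat N)ᵀ = 1 := by
  ext i j
  simp only [Matrix.mul_apply, Matrix.transpose_apply, shiftMat_apply, Matrix.one_apply,
    ite_mul, one_mul, zero_mul]
  simp [Finset.sum_ite_eq, eq_comm]

lemma shiftMat_inv : (shiftMat N)⁻¹ = (shiftMat N)ᵀ :=
  Matrix.inv_eq_right_inv shiftMat_mul_transpose

lemma transpose_mulVec_single (c : Fin N) :
    (shiftMat N)ᵀ.mulVec (Pi.single c 1) = Pi.single (c + 1) 1 := by
  ext j
  simp [Matrix.mulVec, dotProduct, shiftMat_apply, Pi.single_apply, eq_comm]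

lemma pow_mulVec_single (k : ℕ) (a : Fin N) :
    ((shiftMat N)ᵀ ^ k).mulVec (Pi.single a 1) = Pi.single (a + (k : Fin N)) 1 := by
  induction k generalizing a with
  | zero =>
    simp only [pow_zero, Matrix.one_mulVec, Nat.cast_zero, add_zero]
  | succ k ih =>
    rw [pow_succ, ← Matrix.mulVec_mulVec, transpose_mulVec_single, ih]
    congr 1
    push_cast
    abel

lemma traj_apply (M : ℕ) (a : Fin N) (m : Fin M) (j : Fin N) :
    cyclicTrajMat N M a m j = if j = a + ((m : ℕ) : Fin N) then 1 else 0 := by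
  rw [cyclicTrajMat, Matrix.of_apply, shiftMat_inv, pow_mulVec_single, Pi.single_apply]

lemma sum_sq_ind {c d : Fin N} (hcd : c ≠ d) :
    ∑ j : Fin N, ((if j = c then (1:ℝ) else 0) - (if j = d then 1 else 0))^2 = 2 := by
  have h : ∀ j : Fin N, ((if j = c then (1:ℝ) else 0) - (if j = d then 1 else 0))^2
      = (if j = c then (1:ℝ) else 0) + (if j = d then 1 else 0) := by
    intro j
    by_cases h1 : j = c <;> by_cases h2 : j = d <;> simp_all <;> norm_num
  simp [h, Finset.sum_add_distrib]
  norm_num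

lemma sum_ind_mul (c d : Fin N) (x : Fin N → ℝ) :
    ∑ j : Fin N, ((if j = c then (1:ℝ) else 0) - (if j = d then 1 else 0)) * x j
      = x c - x d := by
  simp [sub_mul, Finset.sum_sub_distrib, ite_mul]

lemma sum_comp_le {M : ℕ} (c : Fin M → Fin N) (hc : Function.Injective c) (x : Fin N → ℝ) :
    ∑ m : Fin M, (x (c m))^2 ≤ ∑ j : Fin N, (x j)^2 := by
  calc ∑ m : Fin M, (x (c m))^2
      = ∑ j ∈ Finset.univ.image c, (x j)^2 :=
        (Finset.sum_image (f := fun j => (x j)^2) (fun m _ n _ h => hc h)).symm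
    _ ≤ ∑ j : Fin N, (x j)^2 :=
        Finset.sum_le_sum_of_subset_of_nonneg (Finset.subset_univ _)
          (fun j _ _ => sq_nonneg _)

end Aux

/-- (Paper's Lemma) For the cyclic shift system on `ℝ^N` with `M ≤ N` delays, the infimum
soft-rank of the attractor is at least `M/2`: for every pair of distinct states
`e_a ≠ e_b`, the soft-rank of `G_{e_a} - G_{e_b}` is at least `M/2`. -/
theorem cyclic_softRank_ge {N M : ℕ} (hMN : M ≤ N) (a b : Fin N) (hab : a ≠ b) :
    (M : ℝ) / 2 ≤ softRank (cyclicTrajMat N M a - cyclicTrajMat N M b) := by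
  haveI : NeZero N := NeZero.of_pos a.pos
  rcases Nat.eq_zero_or_pos M with hM | hM
  · subst hM
    simp [softRank, frobSq]
  set G := cyclicTrajMat N M a - cyclicTrajMat N M b with hGdef
  set c : Fin M → Fin N := fun m => a + ((m : ℕ) : Fin N) with hc
  set d : Fin M → Fin N := fun m => b + ((m : ℕ) : Fin N) with hd
  have hcd : ∀ m, c m ≠ d m := fun m h => hab (add_right_cancel h)
  have hG : ∀ m j, G m j = (if j = c m then (1:ℝ) else 0) - (if j = d m then 1 else 0) := by
    intro m j
    simp [hGdef, Matrix.sub_apply, traj_apply, hc, hd]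
  -- Frobenius norm squared
  have hfr : frobSq G = 2 * M := by
    simp only [frobSq, hG]
    rw [Finset.sum_congr rfl (fun m _ => sum_sq_ind (hcd m))]
    simp [mul_comm]
  -- injectivity of the index maps
  have hinj : ∀ e : Fin N, Function.Injective (fun m : Fin M => e + ((m : ℕ) : Fin N)) := by
    intro e m₁ m₂ h
    have h2 : ((m₁ : ℕ) : Fin N) = ((m₂ : ℕ) : Fin N) := add_left_cancel h
    have h3 : (m₁ : ℕ) % N = (m₂ : ℕ) % N := by
      have := congrArg Fin.val h2
      simpa [Fin.val_natCast] using this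
    rw [Nat.mod_eq_of_lt (lt_of_lt_of_le m₁.isLt hMN),
      Nat.mod_eq_of_lt (lt_of_lt_of_le m₂.isLt hMN)] at h3
    exact Fin.ext h3
  -- the linear map applied to a vector
  have happ : ∀ x : EuclideanSpace ℝ (Fin N), ∀ m : Fin M,
      (Matrix.toEuclideanLin G) x m = x (c m) - x (d m) := by
    intro x m
    rw [Matrix.toEuclideanLin_apply]
    show (G.mulVec fun j => x j) m = _
    simp only [Matrix.mulVec, dotProduct, hG]
    exact sum_ind_mul (c m) (d m) (fun j => x j)
  -- spectral norm bound
  have hspec : specNorm G ≤ 2 := by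
    rw [specNorm]
    apply ContinuousLinearMap.opNorm_le_bound _ (by norm_num)
    intro x
    show ‖(Matrix.toEuclideanLin G) x‖ ≤ 2 * ‖x‖
    have hxnorm : ∑ j : Fin N, (x j)^2 = ‖x‖^2 := by
      rw [EuclideanSpace.norm_eq, Real.sq_sqrt (by positivity)]
      simp [Real.norm_eq_abs, sq_abs]
    rw [EuclideanSpace.norm_eq]
    have h4 : ∑ m : Fin M, ‖(Matrix.toEuclideanLin G) x m‖^2 ≤ (2 * ‖x‖)^2 := by
      calc ∑ m : Fin M, ‖(Matrix.toEuclideanLin G) x m‖^2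
          = ∑ m : Fin M, (x (c m) - x (d m))^2 := by
            simp [happ x, Real.norm_eq_abs, sq_abs]
        _ ≤ ∑ m : Fin M, (2 * (x (c m))^2 + 2 * (x (d m))^2) := by
            apply Finset.sum_le_sum
            intro m _
            nlinarith [sq_nonneg (x (c m) + x (d m))]
        _ = 2 * (∑ m : Fin M, (x (c m))^2) + 2 * (∑ m : Fin M, (x (d m))^2) := by
            rw [Finset.sum_add_distrib, Finset.mul_sum, Finset.mul_sum]
        _ ≤ 2 * (∑ j : Fin N, (x j)^2) + 2 * (∑ j : Fin N, (x j)^2) := by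
            have h1 := sum_comp_le c (hinj a) (fun j => x j)
            have h2 := sum_comp_le d (hinj b) (fun j => x j)
            nlinarith
        _ = (2 * ‖x‖)^2 := by rw [hxnorm]; ring
    calc √(∑ m : Fin M, ‖(Matrix.toEuclideanLin G) x m‖ ^ 2)
        ≤ √((2 * ‖x‖)^2) := Real.sqrt_le_sqrt h4
      _ = 2 * ‖x‖ := Real.sqrt_sq (by positivity)
  -- positivity of the spectral norm
  have hGne : G ≠ 0 := by
    intro h
    have h0 := congrFun (congrFun h ⟨0, hM⟩) (c ⟨0, hM⟩)
    rw [hG] at h0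
    simp [hcd ⟨0, hM⟩] at h0
  have hpos : 0 < specNorm G := by
    rw [specNorm, norm_pos_iff]
    exact (LinearEquiv.map_ne_zero_iff _).mpr
      ((LinearEquiv.map_ne_zero_iff _).mpr hGne)
  -- conclude
  rw [softRank, hfr, div_le_div_iff₀ two_pos (by positivity)]
  nlinarith [mul_le_mul hspec hspec hpos.le (by norm_num : (0:ℝ) ≤ 2),
    Nat.cast_nonneg (α := ℝ) M]
end
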